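/- Let k be any field and consider the polynomial ring k[x,y,u,v,f,g,p,q] graded so that x, y, u, v have degree 1 and f, g, p, q have degree 2. There do not exist weighted-homogeneous polynomials x_1, x_2 of degree 1, q_1, q_2 of degree 3, and g_1, h_1 of degree 2 in this ring such that x²f + y²g + u²p + v²q = x_1q_1 + x_2q_2 + g_1h_1. -/

import Mathlib

/-- The weights on the polynomial ring `k[x,y,u,v,f,g,p,q]`: the first four variables
`x, y, u, v` have degree 1 and the last four variables `f, g, p, q` have degree 2. -/
def strengthWeight : Fin 8 → ℕ := fun i => if (i : ℕ) < 4 then 1 else 2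

namespace CaseBAux
open MvPolynomial Finsupp

def w6 : Fin 6 → ℕ := fun i => if (i : ℕ) < 2 then 1 else 2

variable {k : Type*} [Field k]

lemma weight_apply' {n : ℕ} (w : Fin n → ℕ) (m : Fin n →₀ ℕ) :
    Finsupp.weight w m = ∑ i, m i * w i := by
  rw [Finsupp.weight_apply, Finsupp.sum_fintype]
  · simp [smul_eq_mul]
  · intro; simp

lemma isWH_pow {σ : Type*} {w : σ → ℕ} {φ : MvPolynomial σ k} {m : ℕ}
    (h : φ.IsWeightedHomogeneous w m) (n : ℕ) : (φ ^ n).IsWeightedHomogeneous w (n * m) := by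
  induction n with
  | zero => simpa using isWeightedHomogeneous_one k w
  | succ n ih =>
      rw [pow_succ, Nat.succ_mul]
      exact ih.mul h

lemma aeval_isWH {n p : ℕ} {w : Fin n → ℕ} {w' : Fin p → ℕ}
    (σf : Fin n → MvPolynomial (Fin p) k) (hσ : ∀ i, (σf i).IsWeightedHomogeneous w' (w i))
    {P : MvPolynomial (Fin n) k} {d : ℕ} (h : P.IsWeightedHomogeneous w d) :
    (aeval σf P).IsWeightedHomogeneous w' d := by
  rw [P.as_sum, map_sum]
  apply IsWeightedHomogeneous.sum
  intro m hm
  rw [aeval_monomial]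
  have hprod : (Finsupp.prod m fun i e => σf i ^ e).IsWeightedHomogeneous w'
      (Finsupp.weight w m) := by
    rw [Finsupp.prod, Finsupp.weight_apply, Finsupp.sum]
    apply IsWeightedHomogeneous.prod
    intro i _
    simpa [smul_eq_mul] using isWH_pow (hσ i) (m i)
  have h0 : Finsupp.weight w m = d := h (MvPolynomial.mem_support_iff.mp hm)
  rw [h0] at hprod
  have := (isWeightedHomogeneous_C w' (r := coeff m P) (R := k)).mul hprod
  simpa [algebraMap_eq] using this

lemma pderiv_eq_C {P : MvPolynomial (Fin 6) k} (h : P.IsWeightedHomogeneous w6 2)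
    (j : Fin 6) (hj : w6 j = 2) : ∃ l : k, pderiv j P = C l := by
  have hWH : (pderiv j P).IsWeightedHomogeneous w6 0 := by
    rw [P.as_sum, map_sum]
    apply IsWeightedHomogeneous.sum
    intro m hm
    rw [pderiv_monomial]
    rcases Nat.eq_zero_or_pos (m j) with h0 | h0
    · simp [h0, isWeightedHomogeneous_zero]
    · apply isWeightedHomogeneous_monomial
      have hle : Finsupp.single j 1 ≤ m := by
        rw [Finsupp.single_le_iff]; omega
      have hadd : Finsupp.weight w6 (m - Finsupp.single j 1)
          + Finsupp.weight w6 (Finsupp.single j 1) = Finsupp.weight w6 m := by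
        rw [← map_add, tsub_add_cancel_of_le hle]
      have hm2 : Finsupp.weight w6 m = 2 := h (MvPolynomial.mem_support_iff.mp hm)
      have hsing : Finsupp.weight w6 (Finsupp.single j 1) = 2 := by
        rw [weight_apply']
        simp [Finsupp.single_apply]
        omega
      omega
  haveI : Finsupp.NonTorsionWeight ℕ w6 := Finsupp.nonTorsionWeight_of (R := ℕ) (w := w6) (by decide)
  refine ⟨coeff 0 (pderiv j P), ?_⟩
  ext m
  rcases eq_or_ne m 0 with rfl | hm
  · simp
  · rw [coeff_C, if_neg (Ne.symm hm)]
    by_contra hc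
    exact hm ((Finsupp.weight_eq_zero_iff_eq_zero w6).mp (hWH hc))

lemma wt1 (m : Fin 8 →₀ ℕ) (h : Finsupp.weight strengthWeight m = 1) :
    m = single 0 1 ∨ m = single 1 1 ∨ m = single 2 1 ∨ m = single 3 1 := by
  rw [weight_apply', Fin.sum_univ_eight] at h
  simp only [strengthWeight, show ((0:Fin 8):ℕ)=0 by rfl, show ((1:Fin 8):ℕ)=1 by rfl,
    show ((2:Fin 8):ℕ)=2 by rfl, show ((3:Fin 8):ℕ)=3 by rfl, show ((4:Fin 8):ℕ)=4 by rfl,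
    show ((5:Fin 8):ℕ)=5 by rfl, show ((6:Fin 8):ℕ)=6 by rfl, show ((7:Fin 8):ℕ)=7 by rfl] at h
  norm_num at h
  have : (m 0 = 1 ∧ m 1 = 0 ∧ m 2 = 0 ∧ m 3 = 0 ∧ m 4 = 0 ∧ m 5 = 0 ∧ m 6 = 0 ∧ m 7 = 0)
      ∨ (m 1 = 1 ∧ m 0 = 0 ∧ m 2 = 0 ∧ m 3 = 0 ∧ m 4 = 0 ∧ m 5 = 0 ∧ m 6 = 0 ∧ m 7 = 0)
      ∨ (m 2 = 1 ∧ m 0 = 0 ∧ m 1 = 0 ∧ m 3 = 0 ∧ m 4 = 0 ∧ m 5 = 0 ∧ m 6 = 0 ∧ m 7 = 0)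
      ∨ (m 3 = 1 ∧ m 0 = 0 ∧ m 1 = 0 ∧ m 2 = 0 ∧ m 4 = 0 ∧ m 5 = 0 ∧ m 6 = 0 ∧ m 7 = 0) := by
    omega
  rcases this with ⟨h1,h2,h3,h4,h5,h6,h7,h8⟩|⟨h1,h2,h3,h4,h5,h6,h7,h8⟩|⟨h1,h2,h3,h4,h5,h6,h7,h8⟩|⟨h1,h2,h3,h4,h5,h6,h7,h8⟩
  · left; ext j; fin_cases j <;> simp_all [Finsupp.single_apply] <;> decide
  · right; left; ext j; fin_cases j <;> simp_all [Finsupp.single_apply] <;> decide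
  · right; right; left; ext j; fin_cases j <;> simp_all [Finsupp.single_apply] <;> decide
  · right; right; right; ext j; fin_cases j <;> simp_all [Finsupp.single_apply] <;> decide

lemma wt_single_lt4 (i : Fin 8) (hi : (i:ℕ) < 4) :
    Finsupp.weight strengthWeight (single i 1) = 1 := by
  fin_cases i <;>
    simp_all [weight_apply', Fin.sum_univ_eight, strengthWeight, Finsupp.single_apply] <;> decide

lemma shape1 {P : MvPolynomial (Fin 8) k} (h : P.IsWeightedHomogeneous strengthWeight 1) :
    ∃ c : Fin 4 → k, P = C (c 0) * X 0 + C (c 1) * X 1 + C (c 2) * X 2 + C (c 3) * X 3 := by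
  refine ⟨![coeff (single 0 1) P, coeff (single 1 1) P, coeff (single 2 1) P,
      coeff (single 3 1) P], ?_⟩
  ext m
  simp only [coeff_add, coeff_C_mul, coeff_X', Matrix.cons_val_zero, Matrix.cons_val_one,
    Matrix.head_cons]
  by_cases hw : Finsupp.weight strengthWeight m = 1
  · rcases wt1 m hw with rfl | rfl | rfl | rfl <;>
      simp [Finsupp.single_eq_single_iff]
  · have hz : coeff m P = 0 := by
      by_contra hc; exact hw (h hc)
    rw [hz]
    have h0 : ¬ (single (0 : Fin 8) 1 = m) := fun he => hw (he ▸ wt_single_lt4 0 (by decide))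
    have h1 : ¬ (single (1 : Fin 8) 1 = m) := fun he => hw (he ▸ wt_single_lt4 1 (by decide))
    have h2 : ¬ (single (2 : Fin 8) 1 = m) := fun he => hw (he ▸ wt_single_lt4 2 (by decide))
    have h3 : ¬ (single (3 : Fin 8) 1 = m) := fun he => hw (he ▸ wt_single_lt4 3 (by decide))
    simp [h0, h1, h2, h3]

lemma minor_ne (a b : Fin 4 → k) (h : LinearIndependent k ![a, b]) :
    ∃ i j : Fin 4, a i * b j - a j * b i ≠ 0 := by
  by_contra hc
  push_neg at hc
  rcases eq_or_ne a 0 with rfl | ha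
  · exact h.ne_zero 0 (by simp)
  · obtain ⟨i0, hi0⟩ : ∃ i0, a i0 ≠ 0 := by
      by_contra h'; push_neg at h'; exact ha (funext h')
    have := (LinearIndependent.pair_iff.mp h) (b i0) (-(a i0)) ?_
    · exact hi0 (neg_eq_zero.mp this.2)
    · funext j
      have h2 := hc j i0
      simp only [Pi.add_apply, Pi.smul_apply, Pi.neg_apply, smul_eq_mul, Pi.zero_apply, neg_mul]
      linear_combination h2

lemma kernel_pair (c d : Fin 4 → k) :
    ∃ a b : Fin 4 → k, (∑ i, c i * a i) = 0 ∧ (∑ i, c i * b i) = 0 ∧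
      (∑ i, d i * a i) = 0 ∧ (∑ i, d i * b i) = 0 ∧
      ∃ i j : Fin 4, a i * b j - a j * b i ≠ 0 := by
  classical
  set M : Matrix (Fin 2) (Fin 4) k := ![c, d] with hM
  set L := M.mulVecLin with hL
  have hrank : 2 ≤ Module.finrank k (LinearMap.ker L) := by
    have h1 := LinearMap.finrank_range_add_finrank_ker L
    have h2 : Module.finrank k (Fin 4 → k) = 4 := Module.finrank_fin_fun k
    have h3 : Module.finrank k (LinearMap.range L) ≤ 2 := by
      have := Submodule.finrank_le (LinearMap.range L)
      simpa [Module.finrank_fin_fun] using this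
    omega
  let B := Module.finBasis k (LinearMap.ker L)
  set n := Module.finrank k (LinearMap.ker L)
  let i0 : Fin n := ⟨0, by omega⟩
  let i1 : Fin n := ⟨1, by omega⟩
  set a' := B i0
  set b' := B i1
  have hli : LinearIndependent k ![(a' : Fin 4 → k), (b' : Fin 4 → k)] := by
    have h1 : LinearIndependent k (fun t : Fin 2 => B (![i0, i1] t)) :=
      B.linearIndependent.comp ![i0, i1] (by
        intro x y hxy
        fin_cases x <;> fin_cases y <;> simp_all [i0, i1])
    have h2 := h1.map' (LinearMap.ker L).subtype (Submodule.ker_subtype _)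
    convert h2 using 1
    funext t
    fin_cases t <;> rfl
    all_goals rfl
  obtain ⟨i, j, hij⟩ := minor_ne _ _ hli
  have haK := a'.2
  have hbK := b'.2
  rw [LinearMap.mem_ker] at haK hbK
  refine ⟨a', b', ?_, ?_, ?_, ?_, ⟨i, j, hij⟩⟩
  · have := congrFun haK 0
    simp only [hL, hM, Matrix.mulVecLin_apply, Matrix.mulVec, dotProduct, Pi.zero_apply,
      Matrix.cons_val_zero, Matrix.cons_val_one, Matrix.head_cons] at this
    exact this
  · have := congrFun hbK 0
    simp only [hL, hM, Matrix.mulVecLin_apply, Matrix.mulVec, dotProduct, Pi.zero_apply,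
      Matrix.cons_val_zero, Matrix.cons_val_one, Matrix.head_cons] at this
    exact this
  · have := congrFun haK 1
    simp only [hL, hM, Matrix.mulVecLin_apply, Matrix.mulVec, dotProduct, Pi.zero_apply,
      Matrix.cons_val_zero, Matrix.cons_val_one, Matrix.head_cons] at this
    exact this
  · have := congrFun hbK 1
    simp only [hL, hM, Matrix.mulVecLin_apply, Matrix.mulVec, dotProduct, Pi.zero_apply,
      Matrix.cons_val_zero, Matrix.cons_val_one, Matrix.head_cons] at this
    exact this

lemma final (a b ν : Fin 4 → k) (Q : MvPolynomial (Fin 6) k)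
    (h : ∀ j : Fin 4, (C (a j) * X 0 + C (b j) * X 1 : MvPolynomial (Fin 6) k) ^ 2 = C (ν j) * Q)
    (i j : Fin 4) (hd : a i * b j - a j * b i ≠ 0) : False := by
  have hν : ν j ≠ 0 := by
    intro h0
    have h1 : (C (a j) * X 0 + C (b j) * X 1 : MvPolynomial (Fin 6) k) ^ 2 = 0 := by
      rw [h j, h0, map_zero, zero_mul]
    have h2 : (C (a j) * X 0 + C (b j) * X 1 : MvPolynomial (Fin 6) k) = 0 :=
      pow_eq_zero_iff two_ne_zero |>.mp h1
    have ha : a j = 0 := by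
      have := congrArg (coeff (Finsupp.single 0 1)) h2
      simpa [coeff_X', Finsupp.single_eq_single_iff] using this
    have hb : b j = 0 := by
      have := congrArg (coeff (Finsupp.single 1 1)) h2
      simpa [coeff_X', Finsupp.single_eq_single_iff] using this
    apply hd; rw [ha, hb]; ring
  have hj0 := congrArg (eval ![b j, -(a j), 0, 0, 0, 0]) (h j)
  have hi0 := congrArg (eval ![b j, -(a j), 0, 0, 0, 0]) (h i)
  simp only [map_add, map_mul, map_pow, eval_C, eval_X, Matrix.cons_val_zero,
    Matrix.cons_val_one, Matrix.head_cons] at hj0 hi0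
  have hQ : ν j * eval ![b j, -(a j), 0, 0, 0, 0] Q = 0 := by rw [← hj0]; ring
  have hQ0 : eval ![b j, -(a j), 0, 0, 0, 0] Q = 0 := by
    rcases mul_eq_zero.mp hQ with h' | h'
    · exact absurd h' hν
    · exact h'
  have h5 : (a i * b j - a j * b i) ^ 2 = ν i * eval ![b j, -(a j), 0, 0, 0, 0] Q := by
    rw [← hi0]; ring
  rw [hQ0, mul_zero] at h5
  exact hd (pow_eq_zero_iff two_ne_zero |>.mp h5)

end CaseBAux

open MvPolynomial in
/-- In `k[x,y,u,v,f,g,p,q]` with `deg x = deg y = deg u = deg v = 1` and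
`deg f = deg g = deg p = deg q = 2`, there are no weighted-homogeneous polynomials
`x₁, x₂` of degree 1, `q₁, q₂` of degree 3 and `g₁, h₁` of degree 2 with
`x²f + y²g + u²p + v²q = x₁q₁ + x₂q₂ + g₁h₁`. -/
theorem case_b (k : Type*) [Field k] :
    ¬ ∃ x1 x2 q1 q2 g1 h1 : MvPolynomial (Fin 8) k,
      x1.IsWeightedHomogeneous strengthWeight 1 ∧
      x2.IsWeightedHomogeneous strengthWeight 1 ∧
      q1.IsWeightedHomogeneous strengthWeight 3 ∧
      q2.IsWeightedHomogeneous strengthWeight 3 ∧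
      g1.IsWeightedHomogeneous strengthWeight 2 ∧
      h1.IsWeightedHomogeneous strengthWeight 2 ∧
      (X 0 ^ 2 * X 4 + X 1 ^ 2 * X 5 + X 2 ^ 2 * X 6 + X 3 ^ 2 * X 7 :
          MvPolynomial (Fin 8) k) = x1 * q1 + x2 * q2 + g1 * h1 := by
  classical
  rintro ⟨x1, x2, q1, q2, g1, h1, hx1, hx2, hq1, hq2, hg1, hh1, heq⟩
  obtain ⟨c, hc⟩ := CaseBAux.shape1 hx1
  obtain ⟨d, hd⟩ := CaseBAux.shape1 hx2
  obtain ⟨a, b, hca, hcb, hda, hdb, i, j, hij⟩ := CaseBAux.kernel_pair c d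
  -- the substitution
  set e : Fin 4 → MvPolynomial (Fin 6) k :=
    fun i => C (a i) * X 0 + C (b i) * X 1 with he
  set σf : Fin 8 → MvPolynomial (Fin 6) k :=
    ![e 0, e 1, e 2, e 3, X 2, X 3, X 4, X 5] with hσ
  have hσWH : ∀ t : Fin 8, (σf t).IsWeightedHomogeneous CaseBAux.w6 (strengthWeight t) := by
    have hCX : ∀ (r : k) (t : Fin 6),
        (C r * X t : MvPolynomial (Fin 6) k).IsWeightedHomogeneous CaseBAux.w6 (CaseBAux.w6 t) := by
      intro r t
      simpa using (isWeightedHomogeneous_C CaseBAux.w6 (r := r)).mul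
        (isWeightedHomogeneous_X k CaseBAux.w6 t)
    intro t
    fin_cases t <;>
      simp only [hσ, he, Matrix.cons_val_zero, Matrix.cons_val_one, Matrix.head_cons,
        Matrix.cons_val_two, Matrix.tail_cons, Matrix.cons_val_three, Matrix.cons_val_four,
        strengthWeight] <;>
      first
        | exact (hCX _ 0).add (hCX _ 1)
        | exact isWeightedHomogeneous_X k CaseBAux.w6 _
  have hGwh := CaseBAux.aeval_isWH σf hσWH hg1
  have hHwh := CaseBAux.aeval_isWH σf hσWH hh1
  set G := aeval σf g1 with hG
  set H := aeval σf h1 with hH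
  -- x1 and x2 map to zero
  have hx1im : aeval σf x1 = 0 := by
    have h' : aeval σf x1 = C (∑ i, c i * a i) * X 0 + C (∑ i, c i * b i) * X 1 := by
      rw [hc]
      simp only [map_add, map_mul, aeval_X, aeval_C, algebraMap_eq,
        show σf 0 = e 0 from rfl, show σf 1 = e 1 from rfl, show σf 2 = e 2 from rfl,
        show σf 3 = e 3 from rfl, he, Fin.sum_univ_four, C_add, C_mul]
      ring
    rw [h', hca, hcb]
    simp
  have hx2im : aeval σf x2 = 0 := by
    have h' : aeval σf x2 = C (∑ i, d i * a i) * X 0 + C (∑ i, d i * b i) * X 1 := by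
      rw [hd]
      simp only [map_add, map_mul, aeval_X, aeval_C, algebraMap_eq,
        show σf 0 = e 0 from rfl, show σf 1 = e 1 from rfl, show σf 2 = e 2 from rfl,
        show σf 3 = e 3 from rfl, he, Fin.sum_univ_four, C_add, C_mul]
      ring
    rw [h', hda, hdb]
    simp
  -- image of the main equation
  have hE : e 0 ^ 2 * X 2 + e 1 ^ 2 * X 3 + e 2 ^ 2 * X 4 + e 3 ^ 2 * X 5 = G * H := by
    have h' := congrArg (aeval σf) heq
    simp only [map_add, map_mul, map_pow, aeval_X,
      show σf 0 = e 0 from rfl, show σf 1 = e 1 from rfl, show σf 2 = e 2 from rfl,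
      show σf 3 = e 3 from rfl, show σf 4 = (X 2 : MvPolynomial (Fin 6) k) from rfl,
      show σf 5 = (X 3 : MvPolynomial (Fin 6) k) from rfl,
      show σf 6 = (X 4 : MvPolynomial (Fin 6) k) from rfl,
      show σf 7 = (X 5 : MvPolynomial (Fin 6) k) from rfl] at h'
    rw [hx1im, hx2im] at h'
    simpa only [zero_mul, zero_add] using h'
  -- partial derivatives of the e's vanish
  have hpe2 : ∀ (i : Fin 4) (t : Fin 6), 2 ≤ (t : ℕ) → pderiv t (e i ^ 2) = 0 := by
    intro i t ht
    have h0 : (0 : Fin 6) ≠ t := fun h => by subst h; exact absurd ht (by decide)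
    have h1 : (1 : Fin 6) ≠ t := fun h => by subst h; exact absurd ht (by decide)
    rw [he]
    simp [pderiv_X_of_ne h0, pderiv_X_of_ne h1]
  -- the constants
  obtain ⟨l2, hl2⟩ := CaseBAux.pderiv_eq_C hGwh 2 (by decide)
  obtain ⟨l3, hl3⟩ := CaseBAux.pderiv_eq_C hGwh 3 (by decide)
  obtain ⟨l4, hl4⟩ := CaseBAux.pderiv_eq_C hGwh 4 (by decide)
  obtain ⟨l5, hl5⟩ := CaseBAux.pderiv_eq_C hGwh 5 (by decide)
  obtain ⟨m2, hm2⟩ := CaseBAux.pderiv_eq_C hHwh 2 (by decide)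
  obtain ⟨m3, hm3⟩ := CaseBAux.pderiv_eq_C hHwh 3 (by decide)
  obtain ⟨m4, hm4⟩ := CaseBAux.pderiv_eq_C hHwh 4 (by decide)
  obtain ⟨m5, hm5⟩ := CaseBAux.pderiv_eq_C hHwh 5 (by decide)
  -- differentiate the main equation
  have D2 : e 0 ^ 2 = C l2 * H + G * C m2 := by
    have h' := congrArg (pderiv 2) hE
    simp only [map_add, pderiv_mul, hpe2 0 2 (by decide), hpe2 1 2 (by decide),
      hpe2 2 2 (by decide), hpe2 3 2 (by decide), hl2, hm2, zero_mul, add_zero,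
      pderiv_X_self, pderiv_X_of_ne (show (3:Fin 6) ≠ 2 by decide),
      pderiv_X_of_ne (show (4:Fin 6) ≠ 2 by decide),
      pderiv_X_of_ne (show (5:Fin 6) ≠ 2 by decide), mul_zero, mul_one, zero_add] at h'
    exact h'
  have D3 : e 1 ^ 2 = C l3 * H + G * C m3 := by
    have h' := congrArg (pderiv 3) hE
    simp only [map_add, pderiv_mul, hpe2 0 3 (by decide), hpe2 1 3 (by decide),
      hpe2 2 3 (by decide), hpe2 3 3 (by decide), hl3, hm3, zero_mul, add_zero,
      pderiv_X_self, pderiv_X_of_ne (show (2:Fin 6) ≠ 3 by decide),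
      pderiv_X_of_ne (show (4:Fin 6) ≠ 3 by decide),
      pderiv_X_of_ne (show (5:Fin 6) ≠ 3 by decide), mul_zero, mul_one, zero_add] at h'
    exact h'
  have D4 : e 2 ^ 2 = C l4 * H + G * C m4 := by
    have h' := congrArg (pderiv 4) hE
    simp only [map_add, pderiv_mul, hpe2 0 4 (by decide), hpe2 1 4 (by decide),
      hpe2 2 4 (by decide), hpe2 3 4 (by decide), hl4, hm4, zero_mul, add_zero,
      pderiv_X_self, pderiv_X_of_ne (show (2:Fin 6) ≠ 4 by decide),
      pderiv_X_of_ne (show (3:Fin 6) ≠ 4 by decide),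
      pderiv_X_of_ne (show (5:Fin 6) ≠ 4 by decide), mul_zero, mul_one, zero_add] at h'
    exact h'
  have D5 : e 3 ^ 2 = C l5 * H + G * C m5 := by
    have h' := congrArg (pderiv 5) hE
    simp only [map_add, pderiv_mul, hpe2 0 5 (by decide), hpe2 1 5 (by decide),
      hpe2 2 5 (by decide), hpe2 3 5 (by decide), hl5, hm5, zero_mul, add_zero,
      pderiv_X_self, pderiv_X_of_ne (show (2:Fin 6) ≠ 5 by decide),
      pderiv_X_of_ne (show (3:Fin 6) ≠ 5 by decide),
      pderiv_X_of_ne (show (4:Fin 6) ≠ 5 by decide), mul_zero, mul_one, zero_add] at h'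
    exact h'
  -- set f = g = p = q = 0
  set ψ : MvPolynomial (Fin 6) k →ₐ[k] MvPolynomial (Fin 6) k :=
    aeval ![X 0, X 1, 0, 0, 0, 0] with hψ
  have hψe : ∀ i : Fin 4, ψ (e i) = e i := by
    intro i
    rw [he]
    simp only [map_add, map_mul, aeval_C, aeval_X, algebraMap_eq, hψ,
      Matrix.cons_val_zero, Matrix.cons_val_one, Matrix.head_cons]
  have hEψ : (0 : MvPolynomial (Fin 6) k) = ψ G * ψ H := by
    have h' := congrArg ψ hE
    simp only [map_add, map_mul, map_pow, hψe, aeval_X, hψ,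
      show (![X 0, X 1, 0, 0, 0, 0] : Fin 6 → MvPolynomial (Fin 6) k) 2 = 0 from rfl,
      show (![X 0, X 1, 0, 0, 0, 0] : Fin 6 → MvPolynomial (Fin 6) k) 3 = 0 from rfl,
      show (![X 0, X 1, 0, 0, 0, 0] : Fin 6 → MvPolynomial (Fin 6) k) 4 = 0 from rfl,
      show (![X 0, X 1, 0, 0, 0, 0] : Fin 6 → MvPolynomial (Fin 6) k) 5 = 0 from rfl,
      mul_zero, add_zero, zero_add] at h'
    exact h'
  have hψC : ∀ r : k, ψ (C r) = C r := by
    intro r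
    rw [hψ]
    simp [algebraMap_eq]
  have Dψ2 : e 0 ^ 2 = C l2 * ψ H + ψ G * C m2 := by
    have h' := congrArg ψ D2
    simpa only [map_add, map_mul, map_pow, hψe, hψC] using h'
  have Dψ3 : e 1 ^ 2 = C l3 * ψ H + ψ G * C m3 := by
    have h' := congrArg ψ D3
    simpa only [map_add, map_mul, map_pow, hψe, hψC] using h'
  have Dψ4 : e 2 ^ 2 = C l4 * ψ H + ψ G * C m4 := by
    have h' := congrArg ψ D4
    simpa only [map_add, map_mul, map_pow, hψe, hψC] using h'
  have Dψ5 : e 3 ^ 2 = C l5 * ψ H + ψ G * C m5 := by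
    have h' := congrArg ψ D5
    simpa only [map_add, map_mul, map_pow, hψe, hψC] using h'
  rcases mul_eq_zero.mp hEψ.symm with hc0 | hc0
  · -- ψ G = 0 : use the l's and ψ H
    rw [hc0, zero_mul, add_zero] at Dψ2 Dψ3 Dψ4 Dψ5
    refine CaseBAux.final a b ![l2, l3, l4, l5] (ψ H) ?_ i j hij
    intro t
    fin_cases t
    · exact Dψ2
    · exact Dψ3
    · exact Dψ4
    · exact Dψ5
  · -- ψ H = 0 : use the m's and ψ G
    rw [hc0, mul_zero, zero_add, mul_comm (ψ G)] at Dψ2 Dψ3 Dψ4 Dψ5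
    refine CaseBAux.final a b ![m2, m3, m4, m5] (ψ G) ?_ i j hij
    intro t
    fin_cases t
    · exact Dψ2
    · exact Dψ3
    · exact Dψ4
    · exact Dψ5
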